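/- Let X, Y be finite sets of ordinals of the same cardinality, F and G construction schemes (of the same type) over X and Y respectively, and h : X → Y the unique increasing bijection. Then G = {h[F] | F ∈ F}. -/

import Mathlib

open Set

/-- A *type* for construction schemes: a sequence `(m_k, n_{k+1}, r_{k+1})`. -/
structure CSType where
  m : ℕ → ℕ
  n : ℕ → ℕ
  r : ℕ → ℕ
  m_zero : m 0 = 1
  n_ge : ∀ k, 1 ≤ k → 2 ≤ n k
  r_inf : ∀ j N, ∃ k, N ≤ k ∧ 1 ≤ k ∧ r k = j
  r_lt : ∀ k, r (k + 1) < m k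
  m_rec : ∀ k, m (k + 1) = r (k + 1) + (m k - r (k + 1)) * n (k + 1)

/-- `C` is an initial segment of `A` (written `C ⊑ A` in the paper). -/
def InitSeg (C A : Finset Ordinal) : Prop :=
  C ⊆ A ∧ ∀ c ∈ C, ∀ d ∈ A, d ≤ c → d ∈ C

/-- `D` (with root `R`) is the canonical decomposition of `F`, an element of rank `k+1`,
into `n_{k+1}` elements of rank `k` forming a Δ-system with root `R` of size `r_{k+1}`,
with `R < D 0 \ R < ⋯ < D (n_{k+1} - 1) \ R`. -/
def CanonDecomp (τ : CSType) (𝓕 : Set (Finset Ordinal)) (k : ℕ)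
    (F : Finset Ordinal) (D : Fin (τ.n (k + 1)) → Finset Ordinal)
    (R : Finset Ordinal) : Prop :=
  (∀ i, D i ∈ 𝓕 ∧ (D i).card = τ.m k) ∧
  (∀ x, x ∈ F ↔ ∃ i, x ∈ D i) ∧
  R.card = τ.r (k + 1) ∧
  (∀ i j, i ≠ j → D i ∩ D j = R) ∧
  (∀ a ∈ R, ∀ i, ∀ b ∈ D i, b ∉ R → a < b) ∧
  (∀ i j : Fin (τ.n (k + 1)), i < j → ∀ b ∈ D i, b ∉ R → ∀ c ∈ D j, c ∉ R → b < c)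

/-- `𝓕` is a construction scheme over the set of ordinals `X` of type `τ`.
Rank is measured by cardinality: an element of rank `k` has cardinality `m_k`. -/
structure IsConstructionScheme (τ : CSType) (X : Set Ordinal)
    (𝓕 : Set (Finset Ordinal)) : Prop where
  subset_X : ∀ F ∈ 𝓕, (F : Set Ordinal) ⊆ X
  card_mem : ∀ F ∈ 𝓕, ∃ k, F.card = τ.m k
  cofinal : ∀ A : Finset Ordinal, (A : Set Ordinal) ⊆ X → ∃ F ∈ 𝓕, A ⊆ F
  initSeg : ∀ k, ∀ E ∈ 𝓕, ∀ F ∈ 𝓕, E.card = τ.m k → F.card = τ.m k →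
    InitSeg (E ∩ F) E
  decomp : ∀ k, ∀ F ∈ 𝓕, F.card = τ.m (k + 1) →
    ∃! D : Fin (τ.n (k + 1)) → Finset Ordinal, ∃ R, CanonDecomp τ 𝓕 k F D R

/-- `ρ(α,β)`: the least `k` such that some element of `𝓕` of rank `k` contains both. -/
noncomputable def csRho (τ : CSType) (𝓕 : Set (Finset Ordinal)) (α β : Ordinal) : ℕ :=
  sInf {k | ∃ F ∈ 𝓕, F.card = τ.m k ∧ α ∈ F ∧ β ∈ F}

/-- The `k`-closure `(β)_k = {α ≤ β | ρ(α,β) ≤ k}` (within `X`). -/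
def csClos (τ : CSType) (𝓕 : Set (Finset Ordinal)) (X : Set Ordinal)
    (k : ℕ) (β : Ordinal) : Set Ordinal :=
  {α ∈ X | α ≤ β ∧ csRho τ 𝓕 α β ≤ k}

/-- `Δ(α,β) = min({k | |(α)_k| ≠ |(β)_k|} ∪ {ω})`, valued in `ℕ∞` (where `⊤` plays
the role of `ω`). -/
noncomputable def csDelta (τ : CSType) (𝓕 : Set (Finset Ordinal)) (X : Set Ordinal)
    (α β : Ordinal) : ℕ∞ :=
  sInf ((fun k : ℕ => (k : ℕ∞)) ''
    {k | (csClos τ 𝓕 X k α).ncard ≠ (csClos τ 𝓕 X k β).ncard})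

/-- The function `Ξ_α : ω → ω ∪ {-1}` associated to a construction scheme. -/
noncomputable def csXi (τ : CSType) (𝓕 : Set (Finset Ordinal)) (X : Set Ordinal)
    (α : Ordinal) (k : ℕ) : ℤ :=
  if k = 0 then 0
  else if (csClos τ 𝓕 X k α).ncard ≤ τ.r k then -1
  else (((csClos τ 𝓕 X k α).ncard : ℤ) - ((csClos τ 𝓕 X (k - 1) α).ncard : ℤ)) /
    ((τ.m (k - 1) : ℤ) - (τ.r k : ℤ))

/-- `F` (of rank `k+1`) captures the pair `{α, β}`: with canonical decomposition
`D` and root `R`, `α ∈ D 0 \ R`, `β ∈ D 1 \ R`, and the increasing bijection from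
`D 0` to `D 1` sends `α` to `β`. -/
def CapturesPair (τ : CSType) (𝓕 : Set (Finset Ordinal)) (k : ℕ)
    (F : Finset Ordinal) (α β : Ordinal) : Prop :=
  F ∈ 𝓕 ∧ F.card = τ.m (k + 1) ∧
  ∃ D R, CanonDecomp τ 𝓕 k F D R ∧
    ∃ (h0 : 0 < τ.n (k + 1)) (h1 : 1 < τ.n (k + 1)),
      α ∈ D ⟨0, h0⟩ ∧ α ∉ R ∧ β ∈ D ⟨1, h1⟩ ∧ β ∉ R ∧
      ((D ⟨0, h0⟩ : Set Ordinal) ∩ Set.Iic α).ncard =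
        ((D ⟨1, h1⟩ : Set Ordinal) ∩ Set.Iic β).ncard

/-- `𝓕` is 2-capturing: for every uncountable `S ⊆ X` and every `k₀` there are a pair
`{α, β} ∈ [S]²` and `F ∈ 𝓕` of rank `l > k₀` capturing it. -/
def TwoCapturing (τ : CSType) (X : Set Ordinal) (𝓕 : Set (Finset Ordinal)) : Prop :=
  ∀ S : Set Ordinal, S ⊆ X → ¬ S.Countable → ∀ k₀ : ℕ,
    ∃ k, k₀ ≤ k ∧ ∃ F α β, α ∈ S ∧ β ∈ S ∧ α < β ∧ CapturesPair τ 𝓕 k F α β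

section StmtFiveAux

lemma csm_pos (τ : CSType) (k : ℕ) : 1 ≤ τ.m k := by
  induction k with
  | zero => simp [τ.m_zero]
  | succ k ih =>
    have hr := τ.r_lt k
    have hrec := τ.m_rec k
    have hn := τ.n_ge (k + 1) (by omega)
    have hs : 1 ≤ τ.m k - τ.r (k + 1) := by omega
    nlinarith

lemma csm_lt (τ : CSType) (k : ℕ) : τ.m k < τ.m (k + 1) := by
  have hr := τ.r_lt k
  have hrec := τ.m_rec k
  have hn := τ.n_ge (k + 1) (by omega)
  have h2 : (τ.m k - τ.r (k + 1)) * 2 ≤ (τ.m k - τ.r (k + 1)) * τ.n (k + 1) :=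
    Nat.mul_le_mul_left _ hn
  omega

lemma csm_strictMono (τ : CSType) : StrictMono τ.m :=
  strictMono_nat_of_lt_succ (csm_lt τ)

lemma initial_unique {F R R' : Finset Ordinal} (hR : R ⊆ F) (hR' : R' ⊆ F)
    (hc : R.card = R'.card)
    (h1 : ∀ a ∈ R, ∀ b ∈ F, b ∉ R → a < b)
    (h2 : ∀ a ∈ R', ∀ b ∈ F, b ∉ R' → a < b) : R = R' := by
  by_cases hsub : R ⊆ R'
  · exact Finset.eq_of_subset_of_card_le hsub hc.ge
  · obtain ⟨x, hxR, hxR'⟩ := Finset.not_subset.mp hsub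
    have hsub' : R' ⊆ R := by
      intro a ha
      have hax : a < x := h2 a ha x (hR hxR) hxR'
      by_contra haR
      exact absurd (h1 x hxR a (hR' ha) haR) (fun hxa => (lt_irrefl a) (hax.trans hxa))
    have heq : R = R' := (Finset.eq_of_subset_of_card_le hsub' hc.le).symm
    exact absurd (heq ▸ hxR) hxR'

lemma canonDecomp_unique (τ : CSType) {𝓕 𝓕' : Set (Finset Ordinal)} {k : ℕ}
    {F : Finset Ordinal} {D D' : Fin (τ.n (k + 1)) → Finset Ordinal}
    {R R' : Finset Ordinal}
    (hd : CanonDecomp τ 𝓕 k F D R) (hd' : CanonDecomp τ 𝓕' k F D' R') :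
    D = D' ∧ R = R' := by
  obtain ⟨hmem, hcov, hRc, hint, hRlt, hblt⟩ := hd
  obtain ⟨hmem', hcov', hRc', hint', hRlt', hblt'⟩ := hd'
  have hn2 : 2 ≤ τ.n (k + 1) := τ.n_ge (k + 1) (by omega)
  have other : ∀ i : Fin (τ.n (k + 1)), ∃ j, i ≠ j := by
    intro i
    rcases eq_or_ne i ⟨0, by omega⟩ with h | h
    · exact ⟨⟨1, by omega⟩, by rw [h]; simp [Fin.ext_iff]⟩
    · exact ⟨⟨0, by omega⟩, h⟩
  have hRsub : ∀ i, R ⊆ D i := by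
    intro i
    obtain ⟨j, hj⟩ := other i
    rw [← hint i j hj]; exact Finset.inter_subset_left
  have hRsub' : ∀ i, R' ⊆ D' i := by
    intro i
    obtain ⟨j, hj⟩ := other i
    rw [← hint' i j hj]; exact Finset.inter_subset_left
  have hDF : ∀ i, D i ⊆ F := fun i x hx => (hcov x).mpr ⟨i, hx⟩
  have hDF' : ∀ i, D' i ⊆ F := fun i x hx => (hcov' x).mpr ⟨i, hx⟩
  have hRF : R ⊆ F := (hRsub ⟨0, by omega⟩).trans (hDF _)
  have hRF' : R' ⊆ F := (hRsub' ⟨0, by omega⟩).trans (hDF' _)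
  have hRR' : R = R' := by
    apply initial_unique hRF hRF' (by rw [hRc, hRc'])
    · intro a ha b hb hbR
      obtain ⟨i, hi⟩ := (hcov b).mp hb
      exact hRlt a ha i b hi hbR
    · intro a ha b hb hbR
      obtain ⟨i, hi⟩ := (hcov' b).mp hb
      exact hRlt' a ha i b hi hbR
  subst hRR'
  have hcard : ∀ i, (D i \ R).card = τ.m k - τ.r (k + 1) := by
    intro i; rw [Finset.card_sdiff_of_subset (hRsub i), (hmem i).2, hRc]
  have hcard' : ∀ i, (D' i \ R).card = τ.m k - τ.r (k + 1) := by
    intro i; rw [Finset.card_sdiff_of_subset (hRsub' i), (hmem' i).2, hRc]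
  have key : ∀ n : ℕ, ∀ i : Fin (τ.n (k + 1)), i.val = n → D i = D' i := by
    intro n
    induction n using Nat.strong_induction_on with
    | _ n ih =>
      intro i hi
      have hIH : ∀ j : Fin (τ.n (k + 1)), j < i → D j = D' j := by
        intro j hj
        exact ih j.val (hi ▸ Fin.lt_def.mp hj) j rfl
      have hblock : D i \ R = D' i \ R := by
        have hsub : D i \ R ⊆ D' i \ R := by
          by_contra hns
          obtain ⟨x, hxB, hxB'⟩ := Finset.not_subset.mp hns
          obtain ⟨hxDi, hxR⟩ := Finset.mem_sdiff.mp hxB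
          have hxF : x ∈ F := hDF i hxDi
          obtain ⟨j, hxj⟩ := (hcov' x).mp hxF
          have hij : i ≠ j := by
            rintro rfl
            exact hxB' (Finset.mem_sdiff.mpr ⟨hxj, hxR⟩)
          rcases lt_or_gt_of_ne hij with hlt | hgt
          · -- i < j : show D' i \ R ⊆ D i \ R, get equality, contradiction
            have hsub2 : D' i \ R ⊆ D i \ R := by
              intro a haB
              obtain ⟨haD', haR⟩ := Finset.mem_sdiff.mp haB
              have hax : a < x := hblt' i j hlt a haD' haR x hxj hxR
              have haF : a ∈ F := hDF' i haD'
              obtain ⟨l, hal⟩ := (hcov a).mp haF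
              rcases lt_trichotomy l i with hl | hl | hl
              · exfalso
                have : D l = D' l := hIH l hl
                have : a ∈ D' l ∩ D' i := Finset.mem_inter.mpr ⟨this ▸ hal, haD'⟩
                rw [hint' l i (Fin.ne_of_lt hl)] at this
                exact haR this
              · subst hl; exact Finset.mem_sdiff.mpr ⟨hal, haR⟩
              · exfalso
                have : x < a := hblt i l hl x hxDi hxR a hal haR
                exact absurd (this.trans hax) (lt_irrefl x)
            have : D' i \ R = D i \ R :=
              Finset.eq_of_subset_of_card_le hsub2 (by rw [hcard, hcard'])
            exact hxB' (this ▸ hxB)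
          · -- j < i
            exfalso
            have hji : (j : Fin _) < i := hgt
            have : D j = D' j := hIH j hji
            have hx2 : x ∈ D j ∩ D i := Finset.mem_inter.mpr ⟨this ▸ hxj, hxDi⟩
            rw [hint j i (Fin.ne_of_lt hji)] at hx2
            exact hxR hx2
        exact Finset.eq_of_subset_of_card_le hsub (by rw [hcard, hcard'])
      calc D i = (D i \ R) ∪ R := (Finset.sdiff_union_of_subset (hRsub i)).symm
        _ = (D' i \ R) ∪ R := by rw [hblock]
        _ = D' i := Finset.sdiff_union_of_subset (hRsub' i)
  exact ⟨funext fun i => key i.val i rfl, rfl⟩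

end StmtFiveAux
section StmtFiveAux2

lemma cs_top_mem {τ : CSType} {X : Finset Ordinal} {𝓕 : Set (Finset Ordinal)}
    (hF : IsConstructionScheme τ (X : Set Ordinal) 𝓕) : X ∈ 𝓕 := by
  obtain ⟨F, hFm, hXF⟩ := hF.cofinal X subset_rfl
  have hFX : F ⊆ X := Finset.coe_subset.mp (hF.subset_X F hFm)
  exact (Finset.Subset.antisymm hFX hXF) ▸ hFm

lemma cs_descend {τ : CSType} {XS : Set Ordinal} {𝓕 : Set (Finset Ordinal)}
    (hF : IsConstructionScheme τ XS 𝓕) :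
    ∀ d k (G : Finset Ordinal), G ∈ 𝓕 → G.card = τ.m (k + 1 + d) →
    ∀ x ∈ G, ∃ G' ∈ 𝓕, G'.card = τ.m (k + 1) ∧ x ∈ G' ∧ G' ⊆ G := by
  intro d
  induction d with
  | zero => exact fun k G hG hc x hx => ⟨G, hG, hc, hx, subset_rfl⟩
  | succ d ih =>
    intro k G hG hc x hx
    have hc' : G.card = τ.m ((k + 1 + d) + 1) := by rw [hc]; congr 1
    obtain ⟨D, R, hD⟩ := (hF.decomp (k + 1 + d) G hG hc').exists
    obtain ⟨i, hxi⟩ := (hD.2.1 x).mp hx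
    have hDi : D i ∈ 𝓕 := (hD.1 i).1
    have hDic : (D i).card = τ.m (k + 1 + d) := (hD.1 i).2
    obtain ⟨G', hG', hG'c, hxG', hsub⟩ := ih k (D i) hDi hDic x hxi
    exact ⟨G', hG', hG'c, hxG', hsub.trans (fun y hy => (hD.2.1 y).mpr ⟨i, hy⟩)⟩

lemma cs_is_piece {τ : CSType} {X : Finset Ordinal} {𝓕 : Set (Finset Ordinal)}
    (hF : IsConstructionScheme τ (X : Set Ordinal) 𝓕) {E : Finset Ordinal} (hE : E ∈ 𝓕)
    {k k₀ : ℕ} (hc : E.card = τ.m k) (hX : X.card = τ.m k₀) (hk : k < k₀) :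
    ∃ G ∈ 𝓕, G.card = τ.m (k + 1) ∧ ∃ D R, CanonDecomp τ 𝓕 k G D R ∧ ∃ i, E = D i := by
  have hne : E.Nonempty := Finset.card_pos.mp (by rw [hc]; exact csm_pos τ k)
  set x := E.max' hne with hxdef
  have hxE : x ∈ E := E.max'_mem hne
  have hxX : x ∈ X := Finset.mem_coe.mp (hF.subset_X E hE hxE)
  have hXmem : X ∈ 𝓕 := cs_top_mem hF
  have hXc : X.card = τ.m (k + 1 + (k₀ - (k + 1))) := by rw [hX]; congr 1; omega
  obtain ⟨G, hG, hGc, hxG, _⟩ := cs_descend hF (k₀ - (k + 1)) k X hXmem hXc x hxX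
  obtain ⟨D, R, hD⟩ := (hF.decomp k G hG hGc).exists
  obtain ⟨i, hxDi⟩ := (hD.2.1 x).mp hxG
  have hDc := hD.1 i
  have hseg := hF.initSeg k E hE (D i) hDc.1 hc hDc.2
  have hsub : E ⊆ D i := by
    intro b hb
    have hbm : b ∈ E ∩ D i :=
      hseg.2 x (Finset.mem_inter.mpr ⟨hxE, hxDi⟩) b hb (E.le_max' b hb)
    exact (Finset.mem_inter.mp hbm).2
  have hEDi : E = D i :=
    Finset.eq_of_subset_of_card_le hsub (hDc.2.trans hc.symm).le
  exact ⟨G, hG, hGc, D, R, hD, i, hEDi⟩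

lemma cs_scheme_subset {τ : CSType} {X : Finset Ordinal} {𝓕 𝓕' : Set (Finset Ordinal)}
    (hF : IsConstructionScheme τ (X : Set Ordinal) 𝓕)
    (hF' : IsConstructionScheme τ (X : Set Ordinal) 𝓕') : 𝓕 ⊆ 𝓕' := by
  obtain ⟨k₀, hk₀⟩ := hF.card_mem X (cs_top_mem hF)
  have key : ∀ j k (E : Finset Ordinal), E ∈ 𝓕 → E.card = τ.m k → k₀ = k + j → E ∈ 𝓕' := by
    intro j
    induction j with
    | zero =>
      intro k E hE hc hk
      have hkk : k = k₀ := by omega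
      subst hkk
      have hEX : E ⊆ X := Finset.coe_subset.mp (hF.subset_X E hE)
      have hEXeq : E = X :=
        Finset.eq_of_subset_of_card_le hEX (hk₀.trans hc.symm).le
      exact hEXeq ▸ cs_top_mem hF'
    | succ j ih =>
      intro k E hE hc hk
      obtain ⟨G, hG, hGc, D, R, hD, i, hEDi⟩ :=
        cs_is_piece hF hE hc hk₀ (by omega)
      have hG' : G ∈ 𝓕' := ih (k + 1) G hG hGc (by omega)
      obtain ⟨D', R', hD'⟩ := (hF'.decomp k G hG' hGc).exists
      have hDD' := (canonDecomp_unique τ hD hD').1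
      rw [hEDi, hDD']
      exact (hD'.1 i).1
  intro E hE
  obtain ⟨k, hk⟩ := hF.card_mem E hE
  have hEX : E ⊆ X := Finset.coe_subset.mp (hF.subset_X E hE)
  have hmle : τ.m k ≤ τ.m k₀ := by
    rw [← hk, ← hk₀]; exact Finset.card_le_card hEX
  have hkk : k ≤ k₀ := (csm_strictMono τ).le_iff_le.mp hmle
  exact key (k₀ - k) k E hE hk (by omega)

end StmtFiveAux2
section StmtFiveAux3

lemma cs_image_scheme {τ : CSType} {X Y : Finset Ordinal} {𝓕 : Set (Finset Ordinal)}
    (hF : IsConstructionScheme τ (X : Set Ordinal) 𝓕)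
    {h : Ordinal → Ordinal} (hbij : Set.BijOn h (X : Set Ordinal) (Y : Set Ordinal))
    (hmono : ∀ a ∈ X, ∀ b ∈ X, a < b → h a < h b) :
    IsConstructionScheme τ (Y : Set Ordinal) {G | ∃ F ∈ 𝓕, G = F.image h} := by
  have hinj : Set.InjOn h (X : Set Ordinal) := hbij.injOn
  have hrefl : ∀ a ∈ X, ∀ b ∈ X, h a ≤ h b → a ≤ b := by
    intro a ha b hb hab
    by_contra hba
    push_neg at hba
    exact absurd (hmono b hb a ha hba) (not_lt.mpr hab)
  have hcardim : ∀ F : Finset Ordinal, F ∈ 𝓕 → (F.image h).card = F.card := by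
    intro F hFm
    exact Finset.card_image_of_injOn (hinj.mono (hF.subset_X F hFm))
  have hmemim : ∀ F : Finset Ordinal, (F : Set Ordinal) ⊆ (X : Set Ordinal) →
      ∀ a ∈ X, h a ∈ F.image h → a ∈ F := by
    intro F hFX a ha hai
    obtain ⟨b, hbF, hba⟩ := Finset.mem_image.mp hai
    rwa [← hinj (hFX hbF) (Finset.mem_coe.mpr ha) hba]
  constructor
  · rintro G ⟨F, hFm, rfl⟩
    rw [Finset.coe_image]
    exact (Set.image_mono (f := h) (hF.subset_X F hFm)).trans hbij.mapsTo.image_subset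
  · rintro G ⟨F, hFm, rfl⟩
    obtain ⟨k, hk⟩ := hF.card_mem F hFm
    exact ⟨k, by rw [hcardim F hFm, hk]⟩
  · intro A hA
    obtain ⟨F, hFm, hBF⟩ := hF.cofinal (X.filter (fun x => h x ∈ A))
      (by intro x hx; exact Finset.mem_coe.mpr (Finset.mem_filter.mp (Finset.mem_coe.mp hx)).1)
    refine ⟨F.image h, ⟨F, hFm, rfl⟩, ?_⟩
    intro a ha
    obtain ⟨x, hxX, rfl⟩ := hbij.surjOn (hA (Finset.mem_coe.mpr ha))
    exact Finset.mem_image.mpr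
      ⟨x, hBF (Finset.mem_filter.mpr ⟨Finset.mem_coe.mp hxX, ha⟩), rfl⟩
  · rintro k E' ⟨E, hEm, rfl⟩ F' ⟨F, hFm, rfl⟩ hEc hFc
    have hEX := hF.subset_X E hEm
    have hFX := hF.subset_X F hFm
    have hEcc : E.card = τ.m k := by rw [← hcardim E hEm]; exact hEc
    have hFcc : F.card = τ.m k := by rw [← hcardim F hFm]; exact hFc
    have hseg := hF.initSeg k E hEm F hFm hEcc hFcc
    constructor
    · exact Finset.inter_subset_left
    · intro c hc d hd hdc
      obtain ⟨hcE, hcF⟩ := Finset.mem_inter.mp hc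
      obtain ⟨a, haE, rfl⟩ := Finset.mem_image.mp hcE
      have haF : a ∈ F := hmemim F hFX a (Finset.mem_coe.mp (hEX haE)) hcF
      obtain ⟨b, hbE, rfl⟩ := Finset.mem_image.mp hd
      have hba : b ≤ a := hrefl b (Finset.mem_coe.mp (hEX hbE)) a
        (Finset.mem_coe.mp (hEX haE)) hdc
      have hbEF : b ∈ E ∩ F :=
        hseg.2 a (Finset.mem_inter.mpr ⟨haE, haF⟩) b hbE hba
      obtain ⟨hbE', hbF'⟩ := Finset.mem_inter.mp hbEF
      exact Finset.mem_inter.mpr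
        ⟨Finset.mem_image_of_mem h hbE', Finset.mem_image_of_mem h hbF'⟩
  · rintro k F' ⟨F, hFm, rfl⟩ hFc
    have hFX := hF.subset_X F hFm
    have hFcc : F.card = τ.m (k + 1) := by rw [← hcardim F hFm]; exact hFc
    obtain ⟨D, R, hD⟩ := (hF.decomp k F hFm hFcc).exists
    obtain ⟨hmem, hcov, hRc, hint, hRlt, hblt⟩ := hD
    have hn2 : 2 ≤ τ.n (k + 1) := τ.n_ge (k + 1) (by omega)
    have other : ∀ i : Fin (τ.n (k + 1)), ∃ j, i ≠ j := by
      intro i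
      rcases eq_or_ne i ⟨0, by omega⟩ with hi | hi
      · exact ⟨⟨1, by omega⟩, by rw [hi]; simp [Fin.ext_iff]⟩
      · exact ⟨⟨0, by omega⟩, hi⟩
    have hRsub : ∀ i, R ⊆ D i := by
      intro i
      obtain ⟨j, hj⟩ := other i
      rw [← hint i j hj]; exact Finset.inter_subset_left
    have hDX : ∀ i, ((D i : Finset Ordinal) : Set Ordinal) ⊆ (X : Set Ordinal) :=
      fun i => hF.subset_X _ (hmem i).1
    have hRX : (R : Set Ordinal) ⊆ (X : Set Ordinal) :=
      (Finset.coe_subset.mpr (hRsub ⟨0, by omega⟩)).trans (hDX _)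
    have hnotR : ∀ i, ∀ b ∈ D i, h b ∉ R.image h → b ∉ R := by
      intro i b _ hb hbR
      exact hb (Finset.mem_image_of_mem h hbR)
    have hDh : CanonDecomp τ {G | ∃ F ∈ 𝓕, G = F.image h} k (F.image h)
        (fun i => (D i).image h) (R.image h) := by
      refine ⟨?_, ?_, ?_, ?_, ?_, ?_⟩
      · intro i
        refine ⟨⟨D i, (hmem i).1, rfl⟩, ?_⟩
        rw [hcardim (D i) (hmem i).1]; exact (hmem i).2
      · intro x
        constructor
        · intro hx
          obtain ⟨a, haF, rfl⟩ := Finset.mem_image.mp hx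
          obtain ⟨i, hai⟩ := (hcov a).mp haF
          exact ⟨i, Finset.mem_image_of_mem h hai⟩
        · rintro ⟨i, hxi⟩
          obtain ⟨a, hai, rfl⟩ := Finset.mem_image.mp hxi
          exact Finset.mem_image_of_mem h ((hcov a).mpr ⟨i, hai⟩)
      · rw [Finset.card_image_of_injOn (hinj.mono hRX)]; exact hRc
      · intro i j hij
        apply Finset.Subset.antisymm
        · intro y hy
          obtain ⟨hyi, hyj⟩ := Finset.mem_inter.mp hy
          obtain ⟨a, hai, rfl⟩ := Finset.mem_image.mp hyi
          have haj : a ∈ D j := hmemim (D j) (hDX j) a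
            (Finset.mem_coe.mp (hDX i hai)) hyj
          have : a ∈ D i ∩ D j := Finset.mem_inter.mpr ⟨hai, haj⟩
          rw [hint i j hij] at this
          exact Finset.mem_image_of_mem h this
        · intro y hy
          obtain ⟨a, haR, rfl⟩ := Finset.mem_image.mp hy
          exact Finset.mem_inter.mpr
            ⟨Finset.mem_image_of_mem h (hRsub i haR),
             Finset.mem_image_of_mem h (hRsub j haR)⟩
      · intro a' ha' i b' hb' hb'R
        obtain ⟨a, haR, rfl⟩ := Finset.mem_image.mp ha'
        obtain ⟨b, hbD, rfl⟩ := Finset.mem_image.mp hb'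
        have hbR : b ∉ R := hnotR i b hbD hb'R
        exact hmono a (Finset.mem_coe.mp (hRX haR)) b
          (Finset.mem_coe.mp (hDX i hbD)) (hRlt a haR i b hbD hbR)
      · intro i j hij b' hb' hb'R c' hc' hc'R
        obtain ⟨b, hbD, rfl⟩ := Finset.mem_image.mp hb'
        obtain ⟨c, hcD, rfl⟩ := Finset.mem_image.mp hc'
        have hbR : b ∉ R := hnotR i b hbD hb'R
        have hcR : c ∉ R := hnotR j c hcD hc'R
        exact hmono b (Finset.mem_coe.mp (hDX i hbD)) c
          (Finset.mem_coe.mp (hDX j hcD)) (hblt i j hij b hbD hbR c hcD hcR)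
    refine ⟨fun i => (D i).image h, ⟨R.image h, hDh⟩, ?_⟩
    rintro D'' ⟨R'', hD''⟩
    exact (canonDecomp_unique τ hD'' hDh).1

end StmtFiveAux3

/-- If `X, Y` are finite sets of ordinals of the same cardinality with
construction schemes `𝓕, 𝓖` of the same type, and `h` is the unique increasing
bijection from `X` to `Y`, then `𝓖 = {h[F] | F ∈ 𝓕}`. -/
theorem stmt5 (τ : CSType) (X Y : Finset Ordinal) (hcard : X.card = Y.card)
    (𝓕 𝓖 : Set (Finset Ordinal))
    (hF : IsConstructionScheme τ (X : Set Ordinal) 𝓕)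
    (hG : IsConstructionScheme τ (Y : Set Ordinal) 𝓖)
    (h : Ordinal → Ordinal) (hbij : Set.BijOn h (X : Set Ordinal) (Y : Set Ordinal))
    (hmono : ∀ a ∈ X, ∀ b ∈ X, a < b → h a < h b) :
    𝓖 = {G | ∃ F ∈ 𝓕, G = F.image h} := by
  have hH := cs_image_scheme hF hbij hmono
  exact Set.Subset.antisymm (cs_scheme_subset hG hH) (cs_scheme_subset hH hG)
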